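/- Let B ≥ 1 be an integer, let L_1,…,L_B be positive reals, let 𝔸 and 𝔹 be arbitrary 2B×2B complex matrices, and let k ∈ ℂ. Then det( 𝔸·fromBlocks(e^{−ik𝕃/2}, e^{ik𝕃/2}, e^{ik𝕃/2}, e^{−ik𝕃/2}) + i·k·𝔹·fromBlocks(e^{−ik𝕃/2}, −e^{ik𝕃/2}, −e^{ik𝕃/2}, e^{−ik𝕃/2}) ) = (2i)^B · det( 𝔸·fromBlocks(−sin(k𝕃/2), cos(k𝕃/2), sin(k𝕃/2), cos(k𝕃/2)) + k·𝔹·fromBlocks(cos(k𝕃/2), sin(k𝕃/2), −cos(k𝕃/2), sin(k𝕃/2)) ). In particular, the exponential and trigonometric forms of the secular equation have the same zero set. -/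
import Mathlib


open Matrix BigOperators

/-- the exponential form of the secular determinant equals `(2i)^B` times the
trigonometric form; in particular the two secular equations have the same zero set. -/
theorem secular_exp_trig_forms (B : ℕ) (hB : 1 ≤ B) (L : Fin B → ℝ) (hL : ∀ b, 0 < L b)
    (𝔸 𝔹 : Matrix (Fin B ⊕ Fin B) (Fin B ⊕ Fin B) ℂ) (k : ℂ) :
    (𝔸 * Matrix.fromBlocks
        (Matrix.diagonal fun b => Complex.exp (-(Complex.I * k * L b / 2)))
        (Matrix.diagonal fun b => Complex.exp (Complex.I * k * L b / 2))
        (Matrix.diagonal fun b => Complex.exp (Complex.I * k * L b / 2))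
        (Matrix.diagonal fun b => Complex.exp (-(Complex.I * k * L b / 2)))
      + (Complex.I * k) • (𝔹 * Matrix.fromBlocks
        (Matrix.diagonal fun b => Complex.exp (-(Complex.I * k * L b / 2)))
        (-(Matrix.diagonal fun b => Complex.exp (Complex.I * k * L b / 2)))
        (-(Matrix.diagonal fun b => Complex.exp (Complex.I * k * L b / 2)))
        (Matrix.diagonal fun b => Complex.exp (-(Complex.I * k * L b / 2))))).det =
      (2 * Complex.I) ^ B *
      (𝔸 * Matrix.fromBlocks
        (-(Matrix.diagonal fun b => Complex.sin (k * L b / 2)))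
        (Matrix.diagonal fun b => Complex.cos (k * L b / 2))
        (Matrix.diagonal fun b => Complex.sin (k * L b / 2))
        (Matrix.diagonal fun b => Complex.cos (k * L b / 2))
      + k • (𝔹 * Matrix.fromBlocks
        (Matrix.diagonal fun b => Complex.cos (k * L b / 2))
        (Matrix.diagonal fun b => Complex.sin (k * L b / 2))
        (-(Matrix.diagonal fun b => Complex.cos (k * L b / 2)))
        (Matrix.diagonal fun b => Complex.sin (k * L b / 2)))).det
    ∧
    ((𝔸 * Matrix.fromBlocks
        (Matrix.diagonal fun b => Complex.exp (-(Complex.I * k * L b / 2)))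
        (Matrix.diagonal fun b => Complex.exp (Complex.I * k * L b / 2))
        (Matrix.diagonal fun b => Complex.exp (Complex.I * k * L b / 2))
        (Matrix.diagonal fun b => Complex.exp (-(Complex.I * k * L b / 2)))
      + (Complex.I * k) • (𝔹 * Matrix.fromBlocks
        (Matrix.diagonal fun b => Complex.exp (-(Complex.I * k * L b / 2)))
        (-(Matrix.diagonal fun b => Complex.exp (Complex.I * k * L b / 2)))
        (-(Matrix.diagonal fun b => Complex.exp (Complex.I * k * L b / 2)))
        (Matrix.diagonal fun b => Complex.exp (-(Complex.I * k * L b / 2))))).det = 0 ↔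
      (𝔸 * Matrix.fromBlocks
        (-(Matrix.diagonal fun b => Complex.sin (k * L b / 2)))
        (Matrix.diagonal fun b => Complex.cos (k * L b / 2))
        (Matrix.diagonal fun b => Complex.sin (k * L b / 2))
        (Matrix.diagonal fun b => Complex.cos (k * L b / 2))
      + k • (𝔹 * Matrix.fromBlocks
        (Matrix.diagonal fun b => Complex.cos (k * L b / 2))
        (Matrix.diagonal fun b => Complex.sin (k * L b / 2))
        (-(Matrix.diagonal fun b => Complex.cos (k * L b / 2)))
        (Matrix.diagonal fun b => Complex.sin (k * L b / 2)))).det = 0) := by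
  set C : Matrix (Fin B) (Fin B) ℂ :=
    Matrix.diagonal fun b => Complex.cos (k * L b / 2) with hC
  set S : Matrix (Fin B) (Fin B) ℂ :=
    Matrix.diagonal fun b => Complex.sin (k * L b / 2) with hS
  set Em : Matrix (Fin B) (Fin B) ℂ :=
    Matrix.diagonal fun b => Complex.exp (-(Complex.I * k * L b / 2)) with hEmdef
  set Ep : Matrix (Fin B) (Fin B) ℂ :=
    Matrix.diagonal fun b => Complex.exp (Complex.I * k * L b / 2) with hEpdef
  set U : Matrix (Fin B ⊕ Fin B) (Fin B ⊕ Fin B) ℂ :=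
    Matrix.fromBlocks (Complex.I • 1) ((-Complex.I) • 1) 1 1 with hUdef
  have hEm : Em = C - Complex.I • S := by
    rw [hEmdef, hC, hS]
    ext i j
    simp only [Matrix.sub_apply, Matrix.smul_apply, Matrix.diagonal_apply, smul_eq_mul]
    split_ifs with h
    · rw [show -(Complex.I * k * L i / 2) = (-(k * L i / 2)) * Complex.I by ring,
        Complex.exp_mul_I, Complex.cos_neg, Complex.sin_neg]
      ring
    · ring
  have hEp : Ep = C + Complex.I • S := by
    rw [hEpdef, hC, hS]
    ext i j
    simp only [Matrix.add_apply, Matrix.smul_apply, Matrix.diagonal_apply, smul_eq_mul]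
    split_ifs with h
    · rw [show Complex.I * k * L i / 2 = (k * L i / 2) * Complex.I by ring,
        Complex.exp_mul_I]
      ring
    · ring
  have hU1 : Matrix.fromBlocks (-S) C S C * U = Matrix.fromBlocks Em Ep Ep Em := by
    rw [hUdef, Matrix.fromBlocks_multiply]
    have b11 : (-S) * (Complex.I • 1) + C * 1 = Em := by
      rw [hEm, Matrix.mul_smul, Matrix.mul_one, Matrix.mul_one]; module
    have b12 : (-S) * ((-Complex.I) • 1) + C * 1 = Ep := by
      rw [hEp, Matrix.mul_smul, Matrix.mul_one, Matrix.mul_one]; module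
    have b21 : S * (Complex.I • 1) + C * 1 = Ep := by
      rw [hEp, Matrix.mul_smul, Matrix.mul_one, Matrix.mul_one]; module
    have b22 : S * ((-Complex.I) • 1) + C * 1 = Em := by
      rw [hEm, Matrix.mul_smul, Matrix.mul_one, Matrix.mul_one]; module
    rw [b11, b12, b21, b22]
  have hU2 : Complex.I • Matrix.fromBlocks Em (-Ep) (-Ep) Em =
      Matrix.fromBlocks C S (-C) S * U := by
    rw [hUdef, Matrix.fromBlocks_multiply, Matrix.fromBlocks_smul]
    have b11 : Complex.I • Em = C * (Complex.I • 1) + S * 1 := by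
      rw [hEm, Matrix.mul_smul, Matrix.mul_one, Matrix.mul_one, smul_sub, smul_smul,
        Complex.I_mul_I, neg_one_smul]
      module
    have b12 : Complex.I • (-Ep) = C * ((-Complex.I) • 1) + S * 1 := by
      rw [hEp, Matrix.mul_smul, Matrix.mul_one, Matrix.mul_one, smul_neg, smul_add, smul_smul,
        Complex.I_mul_I, neg_one_smul]
      module
    have b21 : Complex.I • (-Ep) = (-C) * (Complex.I • 1) + S * 1 := by
      rw [hEp, Matrix.mul_smul, Matrix.mul_one, Matrix.mul_one, smul_neg, smul_add, smul_smul,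
        Complex.I_mul_I, neg_one_smul]
      module
    have b22 : Complex.I • Em = (-C) * ((-Complex.I) • 1) + S * 1 := by
      rw [hEm, Matrix.mul_smul, Matrix.mul_one, Matrix.mul_one, smul_sub, smul_smul,
        Complex.I_mul_I, neg_one_smul]
      module
    rw [b11, b12]
    simp only [Matrix.neg_mul, Matrix.mul_neg, Matrix.mul_smul, Matrix.mul_one, neg_smul, neg_neg, smul_neg]
  have hdetU : U.det = (2 * Complex.I) ^ B := by
    rw [hUdef, Matrix.det_fromBlocks_one₂₂]
    rw [show (Complex.I • 1 - (-Complex.I) • 1 * (1 : Matrix (Fin B) (Fin B) ℂ)) =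
        (2 * Complex.I) • 1 by
      rw [Matrix.mul_one]; rw [neg_smul, sub_neg_eq_add, ← two_smul ℂ, smul_smul]]
    rw [Matrix.det_smul, Matrix.det_one, Fintype.card_fin, mul_one]
  have key : 𝔸 * Matrix.fromBlocks Em Ep Ep Em
      + (Complex.I * k) • (𝔹 * Matrix.fromBlocks Em (-Ep) (-Ep) Em) =
      (𝔸 * Matrix.fromBlocks (-S) C S C + k • (𝔹 * Matrix.fromBlocks C S (-C) S)) * U := by
    rw [Matrix.add_mul, Matrix.smul_mul, Matrix.mul_assoc, Matrix.mul_assoc, hU1, ← hU2,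
      Matrix.mul_smul, mul_comm Complex.I k, mul_smul]
  have hdet : (𝔸 * Matrix.fromBlocks Em Ep Ep Em
      + (Complex.I * k) • (𝔹 * Matrix.fromBlocks Em (-Ep) (-Ep) Em)).det =
      (2 * Complex.I) ^ B *
      (𝔸 * Matrix.fromBlocks (-S) C S C + k • (𝔹 * Matrix.fromBlocks C S (-C) S)).det := by
    rw [key, Matrix.det_mul, hdetU, mul_comm]
  refine ⟨hdet, ?_⟩
  have h2I : ((2 : ℂ) * Complex.I) ^ B ≠ 0 := by
    apply pow_ne_zero
    simp [Complex.I_ne_zero]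
  rw [hdet, mul_eq_zero]
  simp [h2I]
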